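/- Let φ : T_OP(X, X') → T_OP(Y, Y') be a semigroup isomorphism with induced map θ_φ. If α ∈ T_OP(X, X') is idempotent, then θ_φ(ran α) = ran(φ(α)). -/
import Mathlib


open Set Function

/-- The semigroup of order-preserving self-maps of `X` with range contained in `X'`. -/
def OPR {X : Type*} [LinearOrder X] (X' : Set X) : Set (X → X) :=
  {f | Monotone f ∧ Set.range f ⊆ X'}

/-- `φ` is a semigroup isomorphism from `T_OP(X, X')` onto `T_OP(Y, Y')`
(composition written left-to-right: `f * g = g ∘ f`). -/
def IsSgIso {X Y : Type*} [LinearOrder X] [LinearOrder Y] (X' : Set X) (Y' : Set Y)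
    (φ : (X → X) → (Y → Y)) : Prop :=
  Set.BijOn φ (OPR X') (OPR Y') ∧
    ∀ f ∈ OPR X', ∀ g ∈ OPR X', φ (g ∘ f) = φ g ∘ φ f

lemma const_mem_OPR {X : Type*} [LinearOrder X] (X' : Set X) {a : X} (ha : a ∈ X') :
    Function.const X a ∈ OPR X' := by
  refine ⟨monotone_const, ?_⟩
  rintro x ⟨y, rfl⟩
  exact ha

/-- if `α` is idempotent then `θ_φ(ran α) = ran(φ(α))`. -/
theorem stmt_8 {X Y : Type*} [LinearOrder X] [LinearOrder Y] (X' : Set X) (Y' : Set Y)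
    (hX' : X'.Nontrivial) (hY' : Y'.Nontrivial)
    (φ : (X → X) → (Y → Y)) (hφ : IsSgIso X' Y' φ)
    (θ : X → Y) (hbij : Set.BijOn θ X' Y')
    (hθ : ∀ a ∈ X', φ (Function.const X a) = Function.const Y (θ a)) :
    ∀ α ∈ OPR X', α ∘ α = α → θ '' Set.range α = Set.range (φ α) := by
  intro α hα hidem
  obtain ⟨x₀, hx₀, -⟩ := hX'
  obtain ⟨y₀, hy₀, -⟩ := hY'
  have hφα : φ α ∈ OPR Y' := hφ.1.mapsTo hα
  have hφidem : φ α ∘ φ α = φ α := by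
    rw [← hφ.2 α hα α hα, hidem]
  -- key computation: for a ∈ X', φ (α ∘ const a) = const (φ α (θ a))
  have key : ∀ a ∈ X', Function.const Y (φ α (θ a)) = φ (Function.const X (α a)) := by
    intro a ha
    have hca : α ∘ Function.const X a = Function.const X (α a) := rfl
    have := hφ.2 (Function.const X a) (const_mem_OPR X' ha) α hα
    rw [hca, hθ a ha] at this
    rw [this]
    rfl
  ext b
  constructor
  · rintro ⟨_, ⟨x, rfl⟩, rfl⟩
    set a := α x with hax
    have ha : a ∈ X' := hα.2 ⟨x, rfl⟩
    have hfix : α a = a := congrFun hidem x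
    have h := key a ha
    rw [hfix, hθ a ha] at h
    have : φ α (θ a) = θ a := congrFun h y₀
    exact ⟨θ a, this⟩
  · rintro ⟨y, rfl⟩
    set b := φ α y with hb
    have hbfix : φ α b = b := congrFun hφidem y
    have hbY' : b ∈ Y' := hφα.2 ⟨y, rfl⟩
    obtain ⟨a, ha, hab⟩ := hbij.surjOn hbY'
    have h := key a ha
    rw [hab, hbfix] at h
    have h2 : φ (Function.const X a) = φ (Function.const X (α a)) := by
      rw [hθ a ha, hab]; exact h
    have hc : Function.const X a = Function.const X (α a) :=
      hφ.1.injOn (const_mem_OPR X' ha)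
        (const_mem_OPR X' (hα.2 ⟨a, rfl⟩)) h2
    have hfix : a = α a := congrFun hc x₀
    exact ⟨a, ⟨a, hfix.symm⟩, hab⟩
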